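/- arXiv:1809.02311 — 2 statements merged into one kernel-verified Lean document; each statement's English description precedes it below -/
import Mathlib

section
/- For any matrices M₁, M₂, M₃ ∈ SL(2,ℂ), the quantities a_j = Tr M_j (j=1,2,3), a_∞ = Tr(M₁M₂M₃), t₁₂ = Tr(M₁M₂), t₂₃ = Tr(M₂M₃), t₃₁ = Tr(M₃M₁) satisfy the Fricke cubic relation: t₁₂t₂₃t₃₁ + t₁₂² + t₂₃² + t₃₁² − (a₁a₂+a₃a_∞)t₁₂ − (a₂a₃+a₁a_∞)t₂₃ − (a₃a₁+a₂a_∞)t₃₁ + a₁² + a₂² + a₃² + a_∞² + a₁a₂a₃a_∞ − 4 = 0. -/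
open Matrix

theorem stmt2 (M₁ M₂ M₃ : Matrix (Fin 2) (Fin 2) ℂ)
    (h₁ : M₁.det = 1) (h₂ : M₂.det = 1) (h₃ : M₃.det = 1)
    (a₁ a₂ a₃ a_inf t₁₂ t₂₃ t₃₁ : ℂ)
    (ha₁ : a₁ = M₁.trace) (ha₂ : a₂ = M₂.trace) (ha₃ : a₃ = M₃.trace)
    (hainf : a_inf = (M₁ * M₂ * M₃).trace)
    (ht₁₂ : t₁₂ = (M₁ * M₂).trace) (ht₂₃ : t₂₃ = (M₂ * M₃).trace)
    (ht₃₁ : t₃₁ = (M₃ * M₁).trace) :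
    t₁₂ * t₂₃ * t₃₁ + t₁₂ ^ 2 + t₂₃ ^ 2 + t₃₁ ^ 2
      - (a₁ * a₂ + a₃ * a_inf) * t₁₂ - (a₂ * a₃ + a₁ * a_inf) * t₂₃
      - (a₃ * a₁ + a₂ * a_inf) * t₃₁
      + a₁ ^ 2 + a₂ ^ 2 + a₃ ^ 2 + a_inf ^ 2 + a₁ * a₂ * a₃ * a_inf - 4 = 0 := by
  rw [Matrix.det_fin_two] at h₁ h₂ h₃
  subst ha₁ ha₂ ha₃ hainf ht₁₂ ht₂₃ ht₃₁
  simp only [Matrix.trace_fin_two, Matrix.mul_apply, Fin.sum_univ_two]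
  linear_combination ((2) + (-1) * (M₃ 1 1) * (M₃ 1 1) + (-1) * (M₃ 0 0) * (M₃ 0 0) + (-1) * (M₂ 1 1) * (M₂ 1 1) + (1) * (M₂ 1 1) * (M₂ 1 1) * (M₃ 0 0) * (M₃ 1 1) + (-1) * (M₂ 1 0) * (M₂ 1 1) * (M₃ 0 1) * (M₃ 1 1) + (1) * (M₂ 1 0) * (M₂ 1 1) * (M₃ 0 0) * (M₃ 0 1) + (-1) * (M₂ 1 0) * (M₂ 1 0) * (M₃ 0 1) * (M₃ 0 1) + (-1) * (M₂ 0 1) * (M₂ 1 1) * (M₃ 1 0) * (M₃ 1 1) + (1) * (M₂ 0 1) * (M₂ 1 1) * (M₃ 0 0) * (M₃ 1 0) + (-1) * (M₂ 0 1) * (M₂ 0 1) * (M₃ 1 0) * (M₃ 1 0) + (1) * (M₂ 0 0) * (M₂ 1 1) * (M₃ 1 1) * (M₃ 1 1) + (-2) * (M₂ 0 0) * (M₂ 1 1) * (M₃ 0 0) * (M₃ 1 1) + (1) * (M₂ 0 0) * (M₂ 1 1) * (M₃ 0 0) * (M₃ 0 0) + (1) * (M₂ 0 0) * (M₂ 1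 0) * (M₃ 0 1) * (M₃ 1 1) + (-1) * (M₂ 0 0) * (M₂ 1 0) * (M₃ 0 0) * (M₃ 0 1) + (1) * (M₂ 0 0) * (M₂ 0 1) * (M₃ 1 0) * (M₃ 1 1) + (-1) * (M₂ 0 0) * (M₂ 0 1) * (M₃ 0 0) * (M₃ 1 0) + (-1) * (M₂ 0 0) * (M₂ 0 0) + (1) * (M₂ 0 0) * (M₂ 0 0) * (M₃ 0 0) * (M₃ 1 1)) * h₁ + ((2) + (-2) * (M₃ 0 0) * (M₃ 1 1) + (-1) * (M₁ 1 1) * (M₁ 1 1) + (1) * (M₁ 1 1) * (M₁ 1 1) * (M₃ 0 0) * (M₃ 1 1) + (-1) * (M₁ 1 0) * (M₁ 1 1) * (M₃ 0 1) * (M₃ 1 1) + (1) * (M₁ 1 0) * (M₁ 1 1) * (M₃ 0 0) * (M₃ 0 1) + (-1) * (M₁ 1 0) * (M₁ 1 0) * (M₃ 0 1) * (M₃ 0 1) + (-1) * (M₁ 0 1) * (M₁ 1 1) * (M₃ 1 0) * (M₃ 1 1) + (1) * (M₁ 0 1) * (M₁ 1 1) * (M₃ 0 0) * (M₃ 1 0)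 + (1) * (M₁ 0 1) * (M₁ 1 0) * (M₃ 1 1) * (M₃ 1 1) + (-2) * (M₁ 0 1) * (M₁ 1 0) * (M₃ 0 0) * (M₃ 1 1) + (1) * (M₁ 0 1) * (M₁ 1 0) * (M₃ 0 0) * (M₃ 0 0) + (-1) * (M₁ 0 1) * (M₁ 0 1) * (M₃ 1 0) * (M₃ 1 0) + (1) * (M₁ 0 0) * (M₁ 1 0) * (M₃ 0 1) * (M₃ 1 1) + (-1) * (M₁ 0 0) * (M₁ 1 0) * (M₃ 0 0) * (M₃ 0 1) + (1) * (M₁ 0 0) * (M₁ 0 1) * (M₃ 1 0) * (M₃ 1 1) + (-1) * (M₁ 0 0) * (M₁ 0 1) * (M₃ 0 0) * (M₃ 1 0) + (-1) * (M₁ 0 0) * (M₁ 0 0) + (1) * (M₁ 0 0) * (M₁ 0 0) * (M₃ 0 0) * (M₃ 1 1)) * h₂ + ((-2) * (M₂ 0 1) * (M₂ 1 0) + (1) * (M₁ 1 1) * (M₁ 1 1) * (M₂ 0 1) * (M₂ 1 0) + (-1) * (M₁ 1 0) * (M₁ 1 1) * (M₂ 0 1) * (M₂ 1 1) + (1) *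 (M₁ 1 0) * (M₁ 1 1) * (M₂ 0 0) * (M₂ 0 1) + (-1) * (M₁ 1 0) * (M₁ 1 0) * (M₂ 0 1) * (M₂ 0 1) + (-1) * (M₁ 0 1) * (M₁ 1 1) * (M₂ 1 0) * (M₂ 1 1) + (1) * (M₁ 0 1) * (M₁ 1 1) * (M₂ 0 0) * (M₂ 1 0) + (-2) * (M₁ 0 1) * (M₁ 1 0) + (1) * (M₁ 0 1) * (M₁ 1 0) * (M₂ 1 1) * (M₂ 1 1) + (-2) * (M₁ 0 1) * (M₁ 1 0) * (M₂ 0 1) * (M₂ 1 0) + (1) * (M₁ 0 1) * (M₁ 1 0) * (M₂ 0 0) * (M₂ 0 0) + (-1) * (M₁ 0 1) * (M₁ 0 1) * (M₂ 1 0) * (M₂ 1 0) + (1) * (M₁ 0 0) * (M₁ 1 0) * (M₂ 0 1) * (M₂ 1 1) + (-1) * (M₁ 0 0) * (M₁ 1 0) * (M₂ 0 0) * (M₂ 0 1) + (1) * (M₁ 0 0) * (M₁ 0 1) * (M₂ 1 0) * (M₂ 1 1) + (-1) * (M₁ 0 0) * (M₁ 0 1) * (M₂ 0 0) * (M₂ 1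 0) + (1) * (M₁ 0 0) * (M₁ 0 0) * (M₂ 0 1) * (M₂ 1 0)) * h₃
end

section
/- If a function y has a Laurent expansion y(x) = c₋₁(x−a)⁻¹ + c₀ + O(x−a) near x = a with c₋₁ ≠ 0 and y satisfies the sixth Painlevé equation with parameters α₀ = 2(δ−1/2)², β₀ = −2α₁², γ₀ = 2α₃², δ₀ = −2(α₂²−1/4), where δ ≠ 1/2 and a ∉ {0,1}, then c₋₁ = σ·a(a−1)/(2(δ−1/2)) for some σ ∈ {1,−1}. -/
open Complex Filter Topology

set_option maxHeartbeats 1000000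

private lemma analyticAt_deriv_aux {h : ℂ → ℂ} {a : ℂ} (hh : AnalyticAt ℂ h a) :
    AnalyticAt ℂ (deriv h) a := by
  have h1 : AnalyticAt ℂ (ContinuousLinearMap.apply ℂ ℂ (1:ℂ) : (ℂ →L[ℂ] ℂ) → ℂ)
      (fderiv ℂ h a) := (ContinuousLinearMap.apply ℂ ℂ (1:ℂ)).analyticAt _
  have h2 := h1.comp hh.fderiv
  have e : deriv h = fun z => (fderiv ℂ h z) 1 := funext fun z => rfl
  rw [e]; exact h2

/-- At a simple movable pole x = a of a solution of the sixth Painlevé equation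
(with δ ≠ 1/2), the leading Laurent coefficient is cm1 = σ a(a−1)/(2(δ−1/2)),
σ = ±1. -/
theorem stmt5 (a cm1 c0 δ α₁ α₂ α₃ : ℂ) (ha0 : a ≠ 0) (ha1 : a ≠ 1)
    (hδ : δ ≠ 1 / 2) (hc : cm1 ≠ 0)
    (α₀ β₀ γ₀ δ₀ : ℂ)
    (hα₀ : α₀ = 2 * (δ - 1 / 2) ^ 2) (hβ₀ : β₀ = -2 * α₁ ^ 2)
    (hγ₀ : γ₀ = 2 * α₃ ^ 2) (hδ₀ : δ₀ = -2 * (α₂ ^ 2 - 1 / 4))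
    (h : ℂ → ℂ) (hh : AnalyticAt ℂ h a) (hh0 : h a = c0)
    (y : ℂ → ℂ) (hy : ∀ x, y x = cm1 / (x - a) + h x)
    (hP6 : ∀ᶠ x in 𝓝[≠] a,
      deriv (deriv y) x =
        (1 / 2) * (1 / y x + 1 / (y x - 1) + 1 / (y x - x)) * (deriv y x) ^ 2
          - (1 / x + 1 / (x - 1) + 1 / (y x - x)) * deriv y x
          + (y x * (y x - 1) * (y x - x)) / (x ^ 2 * (x - 1) ^ 2) *
            (α₀ + β₀ * x / (y x) ^ 2 + γ₀ * (x - 1) / (y x - 1) ^ 2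
              + δ₀ * (x * (x - 1)) / (y x - x) ^ 2)) :
    cm1 = a * (a - 1) / (2 * (δ - 1 / 2)) ∨
      cm1 = -(a * (a - 1) / (2 * (δ - 1 / 2))) := by
  have ha1' : a - 1 ≠ 0 := sub_ne_zero.mpr ha1
  have hA : (a ^ 2 * (a - 1) ^ 2 : ℂ) ≠ 0 :=
    mul_ne_zero (pow_ne_zero _ ha0) (pow_ne_zero _ ha1')
  have hdne : (2 * (δ - 1 / 2) : ℂ) ≠ 0 :=
    mul_ne_zero two_ne_zero (sub_ne_zero.mpr hδ)
  -- open set where h is analytic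
  obtain ⟨U, hUsub, hUopen, haU⟩ := mem_nhds_iff.mp hh.eventually_analyticAt
  have hUsub' : ∀ x ∈ U, AnalyticAt ℂ h x := fun x hx => hUsub hx
  -- first derivative formula
  have hder : ∀ x ∈ U \ {a}, deriv y x = -cm1 / (x - a) ^ 2 + deriv h x := by
    rintro x ⟨hxU, hxa⟩
    have hxa' : x ≠ a := hxa
    have hx0 : x - a ≠ 0 := sub_ne_zero.mpr hxa'
    have h0 : HasDerivAt (fun z : ℂ => z - a) 1 x := (hasDerivAt_id x).sub_const a
    have h1 : HasDerivAt (fun z : ℂ => cm1 / (z - a)) (-cm1 / (x - a) ^ 2) x := by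
      have h2 := (h0.inv hx0).const_mul cm1
      have e : cm1 * (-1 / (x - a) ^ 2) = -cm1 / (x - a) ^ 2 := by ring
      simpa [div_eq_mul_inv, e] using h2
    have h2 : HasDerivAt h (deriv h x) x :=
      ((hUsub' x hxU).differentiableAt).hasDerivAt
    have hy' : y = fun z => cm1 / (z - a) + h z := funext hy
    rw [hy']
    exact (h1.add h2).deriv
  -- second derivative formula
  have hder2 : ∀ x ∈ U \ {a},
      deriv (deriv y) x = 2 * cm1 / (x - a) ^ 3 + deriv (deriv h) x := by
    rintro x ⟨hxU, hxa⟩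
    have hxa' : x ≠ a := hxa
    have hx0 : x - a ≠ 0 := sub_ne_zero.mpr hxa'
    have hopen : IsOpen (U \ {a}) := hUopen.sdiff isClosed_singleton
    have hmem : U \ {a} ∈ 𝓝 x := hopen.mem_nhds ⟨hxU, hxa⟩
    have heq : deriv y =ᶠ[𝓝 x] fun z => -cm1 / (z - a) ^ 2 + deriv h z :=
      eventually_of_mem hmem fun z hz => hder z hz
    rw [heq.deriv_eq]
    have h0 : HasDerivAt (fun z : ℂ => (z - a) ^ 2) (2 * (x - a)) x := by
      have := ((hasDerivAt_id x).sub_const a).fun_pow 2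
      simpa using this
    have h1 : HasDerivAt (fun z : ℂ => -cm1 / (z - a) ^ 2) (2 * cm1 / (x - a) ^ 3) x := by
      have h2 := (hasDerivAt_const x (-cm1)).fun_div h0 (pow_ne_zero 2 hx0)
      refine h2.congr_deriv ?_
      field_simp
      ring
    have h2 : HasDerivAt (deriv h) (deriv (deriv h) x) x :=
      ((analyticAt_deriv_aux (hUsub' x hxU)).differentiableAt).hasDerivAt
    exact (h1.add h2).deriv
  -- basic tendsto facts
  have hmemU : ∀ᶠ x in 𝓝[≠] a, x ∈ U \ {a} := by
    filter_upwards [mem_nhdsWithin_of_mem_nhds (hUopen.mem_nhds haU),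
      self_mem_nhdsWithin] with x h1 h2
    exact ⟨h1, h2⟩
  have hne : ∀ᶠ x in 𝓝[≠] a, x ≠ a := self_mem_nhdsWithin
  have htsub : Tendsto (fun x : ℂ => x - a) (𝓝[≠] a) (𝓝 0) := by
    have h1 : Tendsto (fun x : ℂ => x - a) (𝓝 a) (𝓝 (a - a)) :=
      tendsto_id.sub tendsto_const_nhds
    simpa using h1.mono_left nhdsWithin_le_nhds
  have htid : Tendsto (fun x : ℂ => x) (𝓝[≠] a) (𝓝 a) :=
    tendsto_id.mono_left nhdsWithin_le_nhds
  have hth : Tendsto h (𝓝[≠] a) (𝓝 (h a)) :=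
    hh.continuousAt.tendsto.mono_left nhdsWithin_le_nhds
  have hth1 : Tendsto (deriv h) (𝓝[≠] a) (𝓝 (deriv h a)) :=
    (analyticAt_deriv_aux hh).continuousAt.tendsto.mono_left nhdsWithin_le_nhds
  have hth2 : Tendsto (deriv (deriv h)) (𝓝[≠] a) (𝓝 (deriv (deriv h) a)) :=
    (analyticAt_deriv_aux (analyticAt_deriv_aux hh)).continuousAt.tendsto.mono_left
      nhdsWithin_le_nhds
  -- A = (x-a) y x → cm1
  have htA : Tendsto (fun x => (x - a) * y x) (𝓝[≠] a) (𝓝 cm1) := by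
    have h1 : Tendsto (fun x : ℂ => cm1 + (x - a) * h x) (𝓝[≠] a)
        (𝓝 (cm1 + 0 * h a)) := tendsto_const_nhds.add (htsub.mul hth)
    rw [show cm1 + 0 * h a = cm1 by ring] at h1
    apply Tendsto.congr' _ h1
    filter_upwards [hne] with x hx
    have hx0 : x - a ≠ 0 := sub_ne_zero.mpr hx
    rw [hy x]
    field_simp
  have htB : Tendsto (fun x => (x - a) * (y x - 1)) (𝓝[≠] a) (𝓝 cm1) := by
    have h1 : Tendsto (fun x : ℂ => (x - a) * y x - (x - a)) (𝓝[≠] a)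
        (𝓝 (cm1 - 0)) := htA.sub htsub
    rw [show cm1 - (0:ℂ) = cm1 by ring] at h1
    exact h1.congr fun x => by ring
  have htC : Tendsto (fun x => (x - a) * (y x - x)) (𝓝[≠] a) (𝓝 cm1) := by
    have h1 : Tendsto (fun x : ℂ => (x - a) * y x - (x - a) * x) (𝓝[≠] a)
        (𝓝 (cm1 - 0 * a)) := htA.sub (htsub.mul htid)
    rw [show cm1 - (0:ℂ) * a = cm1 by ring] at h1
    exact h1.congr fun x => by ring
  -- v = (x-a)^2 y' → -cm1
  have htv : Tendsto (fun x => (x - a) ^ 2 * deriv y x) (𝓝[≠] a) (𝓝 (-cm1)) := by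
    have h1 : Tendsto (fun x : ℂ => -cm1 + (x - a) ^ 2 * deriv h x) (𝓝[≠] a)
        (𝓝 (-cm1 + 0 ^ 2 * deriv h a)) :=
      tendsto_const_nhds.add ((htsub.pow 2).mul hth1)
    rw [show -cm1 + (0:ℂ) ^ 2 * deriv h a = -cm1 by ring] at h1
    apply Tendsto.congr' _ h1
    filter_upwards [hmemU] with x hx
    have hx0 : x - a ≠ 0 := sub_ne_zero.mpr (hx.2 : x ≠ a)
    rw [hder x hx]
    field_simp
  -- (x-a)^3 y'' → 2 cm1
  have htL : Tendsto (fun x => (x - a) ^ 3 * deriv (deriv y) x) (𝓝[≠] a)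
      (𝓝 (2 * cm1)) := by
    have h1 : Tendsto (fun x : ℂ => 2 * cm1 + (x - a) ^ 3 * deriv (deriv h) x) (𝓝[≠] a)
        (𝓝 (2 * cm1 + 0 ^ 3 * deriv (deriv h) a)) :=
      tendsto_const_nhds.add ((htsub.pow 3).mul hth2)
    rw [show 2 * cm1 + (0:ℂ) ^ 3 * deriv (deriv h) a = 2 * cm1 by ring] at h1
    apply Tendsto.congr' _ h1
    filter_upwards [hmemU] with x hx
    have hx0 : x - a ≠ 0 := sub_ne_zero.mpr (hx.2 : x ≠ a)
    rw [hder2 x hx]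
    field_simp
  -- tendsto of the rescaled RHS pieces
  have t1 : Tendsto (fun x => ((x - a) ^ 2 * deriv y x) ^ 2 / ((x - a) * y x))
      (𝓝[≠] a) (𝓝 ((-cm1) ^ 2 / cm1)) := (htv.pow 2).div htA hc
  have t2 : Tendsto (fun x => ((x - a) ^ 2 * deriv y x) ^ 2 / ((x - a) * (y x - 1)))
      (𝓝[≠] a) (𝓝 ((-cm1) ^ 2 / cm1)) := (htv.pow 2).div htB hc
  have t3 : Tendsto (fun x => ((x - a) ^ 2 * deriv y x) ^ 2 / ((x - a) * (y x - x)))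
      (𝓝[≠] a) (𝓝 ((-cm1) ^ 2 / cm1)) := (htv.pow 2).div htC hc
  have t4 : Tendsto (fun x => (x - a) * ((x - a) ^ 2 * deriv y x) / x)
      (𝓝[≠] a) (𝓝 (0 * -cm1 / a)) := (htsub.mul htv).div htid ha0
  have t5 : Tendsto (fun x => (x - a) * ((x - a) ^ 2 * deriv y x) / (x - 1))
      (𝓝[≠] a) (𝓝 (0 * -cm1 / (a - 1))) :=
    (htsub.mul htv).div (htid.sub tendsto_const_nhds) ha1'
  have t6 : Tendsto (fun x => (x - a) ^ 2 * ((x - a) ^ 2 * deriv y x) / ((x - a) * (y x - x)))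
      (𝓝[≠] a) (𝓝 (0 ^ 2 * -cm1 / cm1)) := ((htsub.pow 2).mul htv).div htC hc
  have tden : Tendsto (fun x : ℂ => x ^ 2 * (x - 1) ^ 2) (𝓝[≠] a)
      (𝓝 (a ^ 2 * (a - 1) ^ 2)) :=
    (htid.pow 2).mul ((htid.sub tendsto_const_nhds).pow 2)
  have t7 : Tendsto (fun x => ((x - a) * y x) * ((x - a) * (y x - 1)) * ((x - a) * (y x - x))
      / (x ^ 2 * (x - 1) ^ 2)) (𝓝[≠] a) (𝓝 (cm1 * cm1 * cm1 / (a ^ 2 * (a - 1) ^ 2))) :=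
    ((htA.mul htB).mul htC).div tden hA
  have t8 : Tendsto (fun x => β₀ * x * (x - a) ^ 2 / ((x - a) * y x) ^ 2)
      (𝓝[≠] a) (𝓝 (β₀ * a * 0 ^ 2 / cm1 ^ 2)) :=
    ((tendsto_const_nhds.mul htid).mul (htsub.pow 2)).div (htA.pow 2) (pow_ne_zero 2 hc)
  have t9 : Tendsto (fun x => γ₀ * (x - 1) * (x - a) ^ 2 / ((x - a) * (y x - 1)) ^ 2)
      (𝓝[≠] a) (𝓝 (γ₀ * (a - 1) * 0 ^ 2 / cm1 ^ 2)) :=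
    ((tendsto_const_nhds.mul (htid.sub tendsto_const_nhds)).mul (htsub.pow 2)).div
      (htB.pow 2) (pow_ne_zero 2 hc)
  have t10 : Tendsto (fun x => δ₀ * (x * (x - 1)) * (x - a) ^ 2 / ((x - a) * (y x - x)) ^ 2)
      (𝓝[≠] a) (𝓝 (δ₀ * (a * (a - 1)) * 0 ^ 2 / cm1 ^ 2)) :=
    ((tendsto_const_nhds.mul (htid.mul (htid.sub tendsto_const_nhds))).mul
      (htsub.pow 2)).div (htC.pow 2) (pow_ne_zero 2 hc)
  -- tendsto of G = rescaled RHS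
  have hG : Tendsto (fun x : ℂ =>
      (1 / 2) * (((x - a) ^ 2 * deriv y x) ^ 2 / ((x - a) * y x)
        + ((x - a) ^ 2 * deriv y x) ^ 2 / ((x - a) * (y x - 1))
        + ((x - a) ^ 2 * deriv y x) ^ 2 / ((x - a) * (y x - x)))
      - ((x - a) * ((x - a) ^ 2 * deriv y x) / x
        + (x - a) * ((x - a) ^ 2 * deriv y x) / (x - 1)
        + (x - a) ^ 2 * ((x - a) ^ 2 * deriv y x) / ((x - a) * (y x - x)))
      + ((x - a) * y x) * ((x - a) * (y x - 1)) * ((x - a) * (y x - x))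
          / (x ^ 2 * (x - 1) ^ 2) *
        (α₀ + β₀ * x * (x - a) ^ 2 / ((x - a) * y x) ^ 2
          + γ₀ * (x - 1) * (x - a) ^ 2 / ((x - a) * (y x - 1)) ^ 2
          + δ₀ * (x * (x - 1)) * (x - a) ^ 2 / ((x - a) * (y x - x)) ^ 2))
      (𝓝[≠] a)
      (𝓝 ((1 / 2) * ((-cm1) ^ 2 / cm1 + (-cm1) ^ 2 / cm1 + (-cm1) ^ 2 / cm1)
        - (0 * -cm1 / a + 0 * -cm1 / (a - 1) + 0 ^ 2 * -cm1 / cm1)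
        + cm1 * cm1 * cm1 / (a ^ 2 * (a - 1) ^ 2) *
          (α₀ + β₀ * a * 0 ^ 2 / cm1 ^ 2 + γ₀ * (a - 1) * 0 ^ 2 / cm1 ^ 2
            + δ₀ * (a * (a - 1)) * 0 ^ 2 / cm1 ^ 2))) :=
    ((tendsto_const_nhds.mul ((t1.add t2).add t3)).sub ((t4.add t5).add t6)).add
      (t7.mul (((tendsto_const_nhds.add t8).add t9).add t10))
  -- the rescaled equation: (x-a)^3 * y'' equals G eventually
  have hRt : Tendsto (fun x => (x - a) ^ 3 * deriv (deriv y) x) (𝓝[≠] a)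
      (𝓝 ((1 / 2) * ((-cm1) ^ 2 / cm1 + (-cm1) ^ 2 / cm1 + (-cm1) ^ 2 / cm1)
        - (0 * -cm1 / a + 0 * -cm1 / (a - 1) + 0 ^ 2 * -cm1 / cm1)
        + cm1 * cm1 * cm1 / (a ^ 2 * (a - 1) ^ 2) *
          (α₀ + β₀ * a * 0 ^ 2 / cm1 ^ 2 + γ₀ * (a - 1) * 0 ^ 2 / cm1 ^ 2
            + δ₀ * (a * (a - 1)) * 0 ^ 2 / cm1 ^ 2))) := by
    apply Tendsto.congr' _ hG
    filter_upwards [hP6, hne] with x hx hxa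
    have ht : x - a ≠ 0 := sub_ne_zero.mpr hxa
    rw [hx]
    have e1 : 1 / y x = (x - a) / ((x - a) * y x) := by
      rcases eq_or_ne (y x) 0 with h0 | h0
      · simp [h0]
      · field_simp
    have e2 : 1 / (y x - 1) = (x - a) / ((x - a) * (y x - 1)) := by
      rcases eq_or_ne (y x - 1) 0 with h0 | h0
      · simp [h0]
      · field_simp
    have e3 : 1 / (y x - x) = (x - a) / ((x - a) * (y x - x)) := by
      rcases eq_or_ne (y x - x) 0 with h0 | h0
      · simp [h0]
      · field_simp
    have e4 : β₀ * x / y x ^ 2 = β₀ * x * (x - a) ^ 2 / ((x - a) * y x) ^ 2 := by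
      rcases eq_or_ne (y x) 0 with h0 | h0
      · simp [h0]
      · field_simp
    have e5 : γ₀ * (x - 1) / (y x - 1) ^ 2
        = γ₀ * (x - 1) * (x - a) ^ 2 / ((x - a) * (y x - 1)) ^ 2 := by
      rcases eq_or_ne (y x - 1) 0 with h0 | h0
      · simp [h0]
      · field_simp
    have e6 : δ₀ * (x * (x - 1)) / (y x - x) ^ 2
        = δ₀ * (x * (x - 1)) * (x - a) ^ 2 / ((x - a) * (y x - x)) ^ 2 := by
      rcases eq_or_ne (y x - x) 0 with h0 | h0
      · simp [h0]
      · field_simp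
    rw [e1, e2, e3, e4, e5, e6]
    ring
  -- uniqueness of limits
  have heq := tendsto_nhds_unique htL hRt
  -- simplify the limit value
  have heq2 : 2 * cm1 = 3 / 2 * cm1 + α₀ * cm1 ^ 3 / (a ^ 2 * (a - 1) ^ 2) := by
    rw [heq]
    field_simp
    ring
  -- algebra
  have h5 : α₀ * cm1 ^ 3 = cm1 / 2 * (a ^ 2 * (a - 1) ^ 2) := by
    have h4 : α₀ * cm1 ^ 3 / (a ^ 2 * (a - 1) ^ 2) = cm1 / 2 := by
      linear_combination -heq2
    rw [div_eq_iff hA] at h4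
    linear_combination h4
  have h7 : a ^ 2 * (a - 1) ^ 2 = 2 * α₀ * cm1 ^ 2 :=
    mul_left_cancel₀ hc (by linear_combination -2 * h5)
  rw [hα₀] at h7
  have h6 : (a * (a - 1) - 2 * (δ - 1 / 2) * cm1) * (a * (a - 1) + 2 * (δ - 1 / 2) * cm1)
      = 0 := by linear_combination h7
  rcases mul_eq_zero.mp h6 with h8 | h8
  · left
    rw [eq_div_iff hdne]
    linear_combination -h8
  · right
    rw [← neg_div, eq_div_iff hdne]
    linear_combination h8
end
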